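/- For all integers n ≥ 0 and all t ∈ ℝ, the matrices Rₙ(t) satisfy Givental's recursion relations: d/dt (Rₙ(t))₊₊ = −(i/4)·(Rₙ(t))₋₊; d/dt (Rₙ(t))₋₋ = (i/4)·(Rₙ(t))₊₋; (R_{n+1}(t))₋₊ = −(1/2)·exp(-t/2)·( d/dt (Rₙ(t))₋₊ − (i/4)·(Rₙ(t))₊₊ ); and (R_{n+1}(t))₊₋ = (1/2)·exp(-t/2)·( d/dt (Rₙ(t))₊₋ + (i/4)·(Rₙ(t))₋₋ ). -/

import Mathlib

/-- `α₀ = 1` and, for `n ≥ 1`, `αₙ = ((-1)ⁿ/(8ⁿ·n!))·∏_{ℓ=1}^{n}(2ℓ-1)²`. -/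
noncomputable def alph (n : ℕ) : ℝ :=
  ((-1) ^ n / (8 ^ n * Nat.factorial n)) * ∏ ℓ ∈ Finset.range n, ((2 * (ℓ : ℝ) + 1)) ^ 2

/-- The coefficient matrices of Givental's fundamental solution for ℙ¹:
`R₀(t) = I` and, for `n ≥ 1`,
`Rₙ(t) = ((-1)ⁿ·αₙ/((2n-1)·2ⁿ))·exp(-n·t/2)·Mₙ` with
`(Mₙ)₊₊ = −1`, `(Mₙ)₊₋ = (-1)^{n+1}·2n·i`, `(Mₙ)₋₊ = 2n·i`,
`(Mₙ)₋₋ = (-1)^{n+1}` (index `+` is `0`, index `−` is `1`). -/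
noncomputable def RM : ℕ → ℝ → Matrix (Fin 2) (Fin 2) ℂ
  | 0, _ => 1
  | (n + 1), t =>
      (((-1 : ℂ) ^ (n + 1) * ((alph (n + 1) : ℝ) : ℂ) /
          ((2 * ((n : ℂ) + 1) - 1) * 2 ^ (n + 1))) *
        ((Real.exp (-(((n : ℝ) + 1)) * t / 2) : ℝ) : ℂ)) •
      !![-1, (-1 : ℂ) ^ (n + 2) * (2 * ((n : ℂ) + 1)) * Complex.I;
         (2 * ((n : ℂ) + 1)) * Complex.I, (-1 : ℂ) ^ (n + 2)]

/-- The scalar coefficient of `R_{n+1}`. -/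
noncomputable def Cc (n : ℕ) : ℂ :=
  (-1 : ℂ) ^ (n + 1) * ((alph (n + 1) : ℝ) : ℂ) / ((2 * ((n : ℂ) + 1) - 1) * 2 ^ (n + 1))

/-- The exponential factor of `R_{n+1}`. -/
noncomputable def Ee (n : ℕ) (s : ℝ) : ℂ := ((Real.exp (-(((n : ℝ) + 1)) * s / 2) : ℝ) : ℂ)

lemma key (c m : ℂ) (a t : ℝ) :
    HasDerivAt (fun s : ℝ => c * ((Real.exp (a * s / 2) : ℝ) : ℂ) * m)
      (((a / 2 : ℝ) : ℂ) * (c * ((Real.exp (a * t / 2) : ℝ) : ℂ) * m)) t := by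
  have h1 : HasDerivAt (fun s : ℝ => a * s / 2) (a / 2) t := by
    simpa using ((hasDerivAt_id t).const_mul a).div_const 2
  have h2 := (Real.hasDerivAt_exp (a * t / 2)).comp t h1
  have h3 := h2.ofReal_comp
  have h4 := (h3.const_mul c).mul_const m
  refine HasDerivAt.congr_deriv h4 ?_
  push_cast
  ring

lemma alph_succ (n : ℕ) :
    alph (n + 1) = alph n * (-((2 * (n : ℝ) + 1) ^ 2) / (8 * ((n : ℝ) + 1))) := by
  unfold alph
  rw [Finset.prod_range_succ, Nat.factorial_succ]
  have h1 : (8 : ℝ) ^ n ≠ 0 := by positivity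
  have h2 : ((Nat.factorial n : ℝ)) ≠ 0 := by positivity
  have h3 : ((n : ℝ) + 1) ≠ 0 := by positivity
  push_cast
  field_simp
  ring

lemma RM00' (n : ℕ) (s : ℝ) : RM (n + 1) s 0 0 = Cc n * Ee n s * (-1) := by
  simp [RM, Cc, Ee, Matrix.smul_apply]

lemma RM01' (n : ℕ) (s : ℝ) :
    RM (n + 1) s 0 1 = Cc n * Ee n s * ((-1 : ℂ) ^ (n + 2) * (2 * ((n : ℂ) + 1)) * Complex.I) := by
  simp [RM, Cc, Ee, Matrix.smul_apply]

lemma RM10' (n : ℕ) (s : ℝ) :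
    RM (n + 1) s 1 0 = Cc n * Ee n s * ((2 * ((n : ℂ) + 1)) * Complex.I) := by
  simp [RM, Cc, Ee, Matrix.smul_apply]

lemma RM11' (n : ℕ) (s : ℝ) :
    RM (n + 1) s 1 1 = Cc n * Ee n s * ((-1 : ℂ) ^ (n + 2)) := by
  simp [RM, Cc, Ee, Matrix.smul_apply]

lemma RM_hasDeriv (n : ℕ) (t : ℝ) (m : ℂ) :
    HasDerivAt (fun s : ℝ => Cc n * Ee n s * m)
      (((-(((n : ℝ) + 1)) / 2 : ℝ) : ℂ) * (Cc n * Ee n t * m)) t := by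
  have := key (Cc n) m (-(((n : ℝ) + 1))) t
  simpa [Ee] using this

lemma Cc_succ' (n : ℕ) :
    Cc (n + 1) * (16 * ((n : ℂ) + 2)) = Cc n * ((2 * (n : ℂ) + 1) * (2 * (n : ℂ) + 3)) := by
  have hB : (2 * ((n : ℂ) + 1 + 1) - 1) ≠ 0 := by
    have : (2 * ((n : ℂ) + 1 + 1) - 1) = ((2 * n + 3 : ℕ) : ℂ) := by push_cast; ring
    rw [this]; exact Nat.cast_ne_zero.mpr (by omega)
  have hC : (2 * ((n : ℂ) + 1) - 1) ≠ 0 := by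
    have : (2 * ((n : ℂ) + 1) - 1) = ((2 * n + 1 : ℕ) : ℂ) := by push_cast; ring
    rw [this]; exact Nat.cast_ne_zero.mpr (by omega)
  have hA : ((n : ℂ) + 1 + 1) ≠ 0 := by
    have : ((n : ℂ) + 1 + 1) = ((n + 2 : ℕ) : ℂ) := by push_cast; ring
    rw [this]; exact Nat.cast_ne_zero.mpr (by omega)
  have hD : ((2 : ℂ)) ^ (n + 1) ≠ 0 := pow_ne_zero _ two_ne_zero
  have hE : ((2 : ℂ)) ^ (n + 2) ≠ 0 := pow_ne_zero _ two_ne_zero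
  unfold Cc
  rw [alph_succ (n + 1)]
  push_cast
  field_simp
  ring

lemma Cc_succ (n : ℕ) :
    Cc (n + 1) = Cc n * ((2 * (n : ℂ) + 1) * (2 * (n : ℂ) + 3) / (16 * ((n : ℂ) + 2))) := by
  have h : (16 * ((n : ℂ) + 2)) ≠ 0 := by
    have : (16 * ((n : ℂ) + 2)) = ((16 * (n + 2) : ℕ) : ℂ) := by push_cast; ring
    rw [this]; exact Nat.cast_ne_zero.mpr (by omega)
  rw [← mul_div_assoc, eq_div_iff h]
  exact Cc_succ' n

lemma Ee_succ (n : ℕ) (t : ℝ) :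
    Ee (n + 1) t = ((Real.exp (-t / 2) : ℝ) : ℂ) * Ee n t := by
  unfold Ee
  rw [← Complex.ofReal_mul, ← Real.exp_add]
  push_cast
  ring_nf

lemma Cc_zero : Cc 0 = 1 / 16 := by
  unfold Cc alph
  norm_num

lemma Ee_zero (t : ℝ) : Ee 0 t = ((Real.exp (-t / 2) : ℝ) : ℂ) := by
  unfold Ee
  norm_num

/-- For all `n ≥ 0` and all real `t`, the matrices `Rₙ(t)` satisfy Givental's
recursion relations:
`d/dt (Rₙ)₊₊ = −(i/4)·(Rₙ)₋₊`, `d/dt (Rₙ)₋₋ = (i/4)·(Rₙ)₊₋`,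
`(R_{n+1})₋₊ = −(1/2)·exp(-t/2)·(d/dt (Rₙ)₋₊ − (i/4)·(Rₙ)₊₊)`, and
`(R_{n+1})₊₋ = (1/2)·exp(-t/2)·(d/dt (Rₙ)₊₋ + (i/4)·(Rₙ)₋₋)`. -/
theorem stmt8 (n : ℕ) (t : ℝ) :
    HasDerivAt (fun s => RM n s 0 0) (-(Complex.I / 4) * RM n t 1 0) t ∧
    HasDerivAt (fun s => RM n s 1 1) ((Complex.I / 4) * RM n t 0 1) t ∧
    (∃ d : ℂ, HasDerivAt (fun s => RM n s 1 0) d t ∧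
      RM (n + 1) t 1 0 =
        -(1 / 2) * ((Real.exp (-t / 2) : ℝ) : ℂ) * (d - (Complex.I / 4) * RM n t 0 0)) ∧
    (∃ d : ℂ, HasDerivAt (fun s => RM n s 0 1) d t ∧
      RM (n + 1) t 0 1 =
        (1 / 2) * ((Real.exp (-t / 2) : ℝ) : ℂ) * (d + (Complex.I / 4) * RM n t 1 1)) := by
  cases n with
  | zero =>
    have h00 : ∀ s : ℝ, RM 0 s 0 0 = 1 := fun s => by simp [RM, Matrix.one_apply]
    have h11 : ∀ s : ℝ, RM 0 s 1 1 = 1 := fun s => by simp [RM, Matrix.one_apply]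
    have h10 : ∀ s : ℝ, RM 0 s 1 0 = 0 := fun s => by simp [RM, Matrix.one_apply]
    have h01 : ∀ s : ℝ, RM 0 s 0 1 = 0 := fun s => by simp [RM, Matrix.one_apply]
    refine ⟨?_, ?_, ⟨0, ?_, ?_⟩, ⟨0, ?_, ?_⟩⟩
    · simp only [h00, h10]
      simpa using hasDerivAt_const t (1 : ℂ)
    · simp only [h11, h01]
      simpa using hasDerivAt_const t (1 : ℂ)
    · simp only [h10]
      exact hasDerivAt_const t 0
    · rw [RM10' 0, Cc_zero, Ee_zero, h00]
      push_cast
      ring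
    · simp only [h01]
      exact hasDerivAt_const t 0
    · rw [RM01' 0, Cc_zero, Ee_zero, h11]
      push_cast
      ring
  | succ n =>
    refine ⟨?_, ?_,
      ⟨_, by simp only [RM10']; exact RM_hasDeriv n t _, ?_⟩,
      ⟨_, by simp only [RM01']; exact RM_hasDeriv n t _, ?_⟩⟩
    · have h := RM_hasDeriv n t (-1)
      simp only [RM00', RM10']
      convert h using 1
      push_cast
      linear_combination (-(((n : ℂ) + 1) / 2) * Cc n * Ee n t) * Complex.I_sq
    · have h := RM_hasDeriv n t ((-1 : ℂ) ^ (n + 2))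
      simp only [RM11', RM01']
      convert h using 1
      push_cast
      linear_combination ((-1 : ℂ) ^ (n + 2) * ((n : ℂ) + 1) / 2 * Cc n * Ee n t) * Complex.I_sq
    · rw [RM10' (n + 1), RM00' n, Cc_succ, Ee_succ]
      have h3 : ((n : ℂ) + 2) ≠ 0 := by
        have : ((n : ℂ) + 2) = ((n + 2 : ℕ) : ℂ) := by push_cast; ring
        rw [this]; exact Nat.cast_ne_zero.mpr (by omega)
      push_cast
      field_simp
      ring
    · rw [RM01' (n + 1), RM11' n, Cc_succ, Ee_succ]
      have h3 : ((n : ℂ) + 2) ≠ 0 := by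
        have : ((n : ℂ) + 2) = ((n + 2 : ℕ) : ℂ) := by push_cast; ring
        rw [this]; exact Nat.cast_ne_zero.mpr (by omega)
      push_cast
      field_simp
      ring
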